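/- Let (C,E,s) be an n-exangulated category and X an additive subcategory such that every object A of C admits a chosen distinguished n-exangle A --f_0^A--> X_1^A → ⋯ → X_n^A → GA ⇢ in which f_0^A is a left X-approximation of A and X_1^A, …, X_n^A ∈ X. Then there is a well-defined additive endofunctor G of the quotient category C/X which sends an object A to GA and a morphism ā : A → B to φ̄_{n+1}, where (a, φ_1, …, φ_n, φ_{n+1}) is any morphism of distinguished n-exangles from the chosen n-exangle for A to the chosen n-exangle for B lifting a; in particular φ̄_{n+1} depends neither on the chosen lift nor on the chosen representative a of ā. -/

import Mathlib

open CategoryTheory CategoryTheory.Limits Opposite ZeroObject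

universe v u

/-- A sequence of composable morphisms in `C`, indexed by `ℕ`.
For a complex of length `n+2` we only use the objects `0,…,n+1` and maps `0,…,n`. -/
structure ExSeq (C : Type u) [Category.{v} C] : Type max u v where
  obj : ℕ → C
  map : ∀ i : ℕ, obj i ⟶ obj (i + 1)

/-- A morphism of sequences, where only the components `0,…,n+1` (and the
commutativity of the squares involving the maps `0,…,n`) are relevant. -/
structure ExSeqHom {C : Type u} [Category.{v} C] (n : ℕ) (X Y : ExSeq C) :
    Type max u v where
  hom : ∀ i, X.obj i ⟶ Y.obj i
  comm : ∀ i, i ≤ n → X.map i ≫ hom (i + 1) = hom i ≫ Y.map i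

/-- The data of an `n`-exangulated category: an additive bifunctor
`E : Cᵒᵖ × C ⥤ Ab` together with a predicate singling out the distinguished
`n`-exangles, i.e. the pairs `⟨X, δ⟩` with `s(δ) = [X]`. -/
structure ExData (n : ℕ) (C : Type u) [Category.{v} C] [Preadditive C] :
    Type max u (v + 1) where
  E : Cᵒᵖ ⥤ C ⥤ AddCommGrpCat.{v}
  Dist : ∀ X : ExSeq C, ((E.obj (op (X.obj (n + 1)))).obj (X.obj 0)) → Prop

namespace ExData

variable {n : ℕ} {C : Type u} [Category.{v} C] [Preadditive C] (S : ExData n C)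

/-- `S.Ext Cc A` is the group `E(Cc, A)` of `E`-extensions. -/
abbrev Ext (Cc A : C) : Type v := (S.E.obj (op Cc)).obj A

/-- `a_* δ`, the pushforward of an `E`-extension along `a : A ⟶ A'`. -/
def push {Cc A A' : C} (a : A ⟶ A') (δ : S.Ext Cc A) : S.Ext Cc A' :=
  ((S.E.obj (op Cc)).map a) δ

/-- `c^* δ`, the pullback of an `E`-extension along `c : Cc' ⟶ Cc`. -/
def pull {Cc' Cc A : C} (c : Cc' ⟶ Cc) (δ : S.Ext Cc A) : S.Ext Cc' A :=
  ((S.E.map c.op).app A) δ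

/-- `f` is an inflation if it occurs as the `0`-th differential of a
distinguished `n`-exangle. -/
def IsInflation {A B : C} (f : A ⟶ B) : Prop :=
  ∃ (X : ExSeq C) (δ : S.Ext (X.obj (n + 1)) (X.obj 0)), S.Dist X δ ∧
    ∃ (h0 : X.obj 0 = A) (h1 : X.obj 1 = B),
      X.map 0 = eqToHom h0 ≫ f ≫ eqToHom h1.symm

/-- `f` is a deflation if it occurs as the `n`-th differential of a
distinguished `n`-exangle. -/
def IsDeflation {A B : C} (f : A ⟶ B) : Prop :=
  ∃ (X : ExSeq C) (δ : S.Ext (X.obj (n + 1)) (X.obj 0)), S.Dist X δ ∧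
    ∃ (h0 : X.obj n = A) (h1 : X.obj (n + 1) = B),
      X.map n = eqToHom h0 ≫ f ≫ eqToHom h1.symm

/-- Projective objects. -/
def Proj (P : C) : Prop :=
  ∀ (X : ExSeq C) (δ : S.Ext (X.obj (n + 1)) (X.obj 0)), S.Dist X δ →
    ∀ c : P ⟶ X.obj (n + 1), ∃ b : P ⟶ X.obj n, b ≫ X.map n = c

/-- Injective objects. -/
def Inj (I : C) : Prop :=
  ∀ (X : ExSeq C) (δ : S.Ext (X.obj (n + 1)) (X.obj 0)), S.Dist X δ →
    ∀ c : X.obj 0 ⟶ I, ∃ b : X.obj 1 ⟶ I, X.map 0 ≫ b = c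

/-- `C` has enough projectives. -/
def EnoughProj : Prop :=
  ∀ Cc : C, ∃ (X : ExSeq C) (δ : S.Ext (X.obj (n + 1)) (X.obj 0)),
    S.Dist X δ ∧ X.obj (n + 1) = Cc ∧ ∀ i, 1 ≤ i → i ≤ n → S.Proj (X.obj i)

/-- `C` has enough injectives. -/
def EnoughInj : Prop :=
  ∀ A : C, ∃ (X : ExSeq C) (δ : S.Ext (X.obj (n + 1)) (X.obj 0)),
    S.Dist X δ ∧ X.obj 0 = A ∧ ∀ i, 1 ≤ i → i ≤ n → S.Inj (X.obj i)

end ExData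

section Cone

variable (n : ℕ) {C : Type u} [Category.{v} C] [Preadditive C] [HasBinaryBiproducts C]

/-- `M` is the mapping cone of a morphism `f : X ⟶ Y` of `n`-exangles whose
`0`-th component is (up to the identifications) an identity. -/
structure IsCone {X Y : ExSeq C} (f : ExSeqHom n X Y) (M : ExSeq C) : Prop where
  h0 : M.obj 0 = X.obj 1
  hlast : M.obj (n + 1) = Y.obj (n + 1)
  hmid : ∀ i, i + 1 ≤ n → M.obj (i + 1) = (X.obj (i + 2) ⊞ Y.obj (i + 1))
  map0 : ∀ h : 1 ≤ n, M.map 0 =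
    eqToHom h0 ≫ biprod.lift (-(X.map 1)) (f.hom 1) ≫ eqToHom (hmid 0 h).symm
  mapmid : ∀ i (h : i + 2 ≤ n), M.map (i + 1) =
    eqToHom (hmid i (by omega)) ≫
      biprod.desc (biprod.lift (-(X.map (i + 2))) (f.hom (i + 2)))
        (biprod.lift 0 (Y.map (i + 1))) ≫ eqToHom (hmid (i + 1) h).symm
  maplast : ∀ i (h : i + 1 = n), M.map (i + 1) =
    eqToHom (hmid i (by omega)) ≫ biprod.desc (f.hom (i + 2)) (Y.map (i + 1)) ≫
      eqToHom (show Y.obj (i + 2) = M.obj (i + 2) from by subst h; exact hlast.symm)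

/-- `N` is the mapping cocone of a morphism `g : Y ⟶ X` of `n`-exangles whose
`(n+1)`-st component is (up to the identifications) an identity. -/
structure IsCocone {Y X : ExSeq C} (g : ExSeqHom n Y X) (N : ExSeq C) : Prop where
  h0 : N.obj 0 = Y.obj 0
  hlast : N.obj (n + 1) = X.obj n
  hmid : ∀ i, i + 1 ≤ n → N.obj (i + 1) = (Y.obj (i + 1) ⊞ X.obj i)
  map0 : ∀ h : 1 ≤ n, N.map 0 =
    eqToHom h0 ≫ biprod.lift (-(Y.map 0)) (g.hom 0) ≫ eqToHom (hmid 0 h).symm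
  mapmid : ∀ i (h : i + 2 ≤ n), N.map (i + 1) =
    eqToHom (hmid i (by omega)) ≫
      biprod.desc (biprod.lift (-(Y.map (i + 1))) (g.hom (i + 1)))
        (biprod.lift 0 (X.map i)) ≫ eqToHom (hmid (i + 1) h).symm
  maplast : ∀ i (h : i + 1 = n), N.map (i + 1) =
    eqToHom (hmid i (by omega)) ≫ biprod.desc (g.hom (i + 1)) (X.map i) ≫
      eqToHom (show X.obj (i + 1) = N.obj (i + 2) from by subst h; exact hlast.symm)

end Cone

/-- The axioms (R0), (R1), (R2), (EA1), (EA2), (EA2ᵒᵖ) for the data of an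
`n`-exangulated category, following Herschend–Liu–Nakaoka. -/
structure IsExangulated {n : ℕ} {C : Type u} [Category.{v} C] [Preadditive C]
    [HasBinaryBiproducts C] (S : ExData n C) : Prop where
  /-- `E` is additive in the contravariant variable. -/
  additive_left : S.E.Additive
  /-- `E` is additive in the covariant variable. -/
  additive_right : ∀ X : Cᵒᵖ, (S.E.obj X).Additive
  /-- every `E`-extension admits a realization. -/
  realize : ∀ (A Cc : C) (δ : S.Ext Cc A), ∃ (X : ExSeq C)
    (h0 : X.obj 0 = A) (h1 : X.obj (n + 1) = Cc),
      S.Dist X (S.push (eqToHom h0.symm) (S.pull (eqToHom h1) δ))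
  /-- (R0): morphisms of `E`-extensions lift to morphisms of realizations. -/
  lift : ∀ (X Y : ExSeq C) (δX : S.Ext (X.obj (n + 1)) (X.obj 0))
    (δY : S.Ext (Y.obj (n + 1)) (Y.obj 0)), S.Dist X δX → S.Dist Y δY →
    ∀ (a : X.obj 0 ⟶ Y.obj 0) (c : X.obj (n + 1) ⟶ Y.obj (n + 1)),
      S.push a δX = S.pull c δY →
      ∃ f : ExSeqHom n X Y, f.hom 0 = a ∧ f.hom (n + 1) = c
  /-- (R1), covariant part, middle. -/
  ex_cov_mid : ∀ (X : ExSeq C) (δ : S.Ext (X.obj (n + 1)) (X.obj 0)), S.Dist X δ →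
    ∀ i, i + 1 ≤ n → ∀ (Z : C) (g : Z ⟶ X.obj (i + 1)),
      (g ≫ X.map (i + 1) = 0 ↔ ∃ h : Z ⟶ X.obj i, h ≫ X.map i = g)
  /-- (R1), covariant part, last position. -/
  ex_cov_last : ∀ (X : ExSeq C) (δ : S.Ext (X.obj (n + 1)) (X.obj 0)), S.Dist X δ →
    ∀ (Z : C) (g : Z ⟶ X.obj (n + 1)),
      (S.pull g δ = 0 ↔ ∃ h : Z ⟶ X.obj n, h ≫ X.map n = g)
  /-- (R1), contravariant part, middle. -/
  ex_con_mid : ∀ (X : ExSeq C) (δ : S.Ext (X.obj (n + 1)) (X.obj 0)), S.Dist X δ →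
    ∀ i, i + 1 ≤ n → ∀ (Z : C) (g : X.obj (i + 1) ⟶ Z),
      (X.map i ≫ g = 0 ↔ ∃ h : X.obj (i + 2) ⟶ Z, X.map (i + 1) ≫ h = g)
  /-- (R1), contravariant part, last position. -/
  ex_con_last : ∀ (X : ExSeq C) (δ : S.Ext (X.obj (n + 1)) (X.obj 0)), S.Dist X δ →
    ∀ (Z : C) (g : X.obj 0 ⟶ Z),
      (S.push g δ = 0 ↔ ∃ h : X.obj 1 ⟶ Z, X.map 0 ≫ h = g)
  /-- (R2): the trivial complex `A = A → 0 → ⋯ → 0` realizes `0 ∈ E(0, A)`. -/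
  r2 : ∀ A : C, ∃ (X : ExSeq C) (h0 : X.obj 0 = A) (h1 : X.obj 1 = A),
    X.map 0 = eqToHom (h0.trans h1.symm) ∧
    (∀ i, 2 ≤ i → i ≤ n + 1 → IsZero (X.obj i)) ∧ S.Dist X 0
  /-- (R2)ᵒᵖ: the trivial complex `0 → ⋯ → 0 → A = A` realizes `0 ∈ E(A, 0)`. -/
  r2' : ∀ A : C, ∃ (X : ExSeq C) (h0 : X.obj n = A) (h1 : X.obj (n + 1) = A),
    X.map n = eqToHom (h0.trans h1.symm) ∧
    (∀ i, i + 1 ≤ n → IsZero (X.obj i)) ∧ S.Dist X 0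
  /-- (EA1): inflations are closed under composition. -/
  comp_infl : ∀ {A B D : C} (f : A ⟶ B) (g : B ⟶ D),
    S.IsInflation f → S.IsInflation g → S.IsInflation (f ≫ g)
  /-- (EA1): deflations are closed under composition. -/
  comp_defl : ∀ {A B D : C} (f : A ⟶ B) (g : B ⟶ D),
    S.IsDeflation f → S.IsDeflation g → S.IsDeflation (f ≫ g)
  /-- (EA2): good lifts of `(id, c)` exist. -/
  ea2 : ∀ (X Y : ExSeq C) (ρ : S.Ext (Y.obj (n + 1)) (Y.obj 0))
    (hA : X.obj 0 = Y.obj 0) (c : X.obj (n + 1) ⟶ Y.obj (n + 1)),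
    S.Dist Y ρ → S.Dist X (S.push (eqToHom hA.symm) (S.pull c ρ)) →
    ∃ (f : ExSeqHom n X Y) (_ : f.hom 0 = eqToHom hA) (_ : f.hom (n + 1) = c)
      (M : ExSeq C) (hM : IsCone n f M),
      S.Dist M (S.push (eqToHom hM.h0.symm)
        (S.pull (eqToHom hM.hlast) (S.push (eqToHom hA.symm ≫ X.map 0) ρ)))
  /-- (EA2)ᵒᵖ: good lifts of `(a, id)` exist. -/
  ea2op : ∀ (Y X : ExSeq C) (ρ : S.Ext (Y.obj (n + 1)) (Y.obj 0))
    (hC : Y.obj (n + 1) = X.obj (n + 1)) (a : Y.obj 0 ⟶ X.obj 0),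
    S.Dist Y ρ → S.Dist X (S.push a (S.pull (eqToHom hC.symm) ρ)) →
    ∃ (g : ExSeqHom n Y X) (_ : g.hom 0 = a) (_ : g.hom (n + 1) = eqToHom hC)
      (N : ExSeq C) (hN : IsCocone n g N),
      S.Dist N (S.push (eqToHom hN.h0.symm)
        (S.pull (eqToHom hN.hlast ≫ X.map n ≫ eqToHom hC.symm) ρ))
section Quot

variable {C : Type u} [Category.{v} C] [Preadditive C] [HasZeroObject C]
  [HasBinaryBiproducts C]

/-- A (full) additive subcategory of `C`, given by a class of objects closed
under isomorphisms, finite direct sums and containing the zero objects. -/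
structure AddSubcat (C : Type u) [Category.{v} C] [Preadditive C]
    [HasZeroObject C] [HasBinaryBiproducts C] : Type max u v where
  mem : C → Prop
  zero_mem : ∀ Z : C, IsZero Z → mem Z
  iso_mem : ∀ {A B : C}, (A ≅ B) → mem A → mem B
  sum_mem : ∀ {A B : C}, mem A → mem B → mem (A ⊞ B)

variable (𝒳 : AddSubcat C)

/-- `f : A ⟶ B` is `𝒳`-monic. -/
def XMonic {A B : C} (f : A ⟶ B) : Prop :=
  ∀ M : C, 𝒳.mem M → ∀ g : A ⟶ M, ∃ h : B ⟶ M, f ≫ h = g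

/-- `f : A ⟶ B` is `𝒳`-epic. -/
def XEpic {A B : C} (f : A ⟶ B) : Prop :=
  ∀ M : C, 𝒳.mem M → ∀ g : M ⟶ B, ∃ h : M ⟶ A, h ≫ f = g

/-- `f : A ⟶ B` is a left `𝒳`-approximation of `A`. -/
def LeftApprox {A B : C} (f : A ⟶ B) : Prop := 𝒳.mem B ∧ XMonic 𝒳 f

/-- `f : A ⟶ B` is a right `𝒳`-approximation of `B`. -/
def RightApprox {A B : C} (f : A ⟶ B) : Prop := 𝒳.mem A ∧ XEpic 𝒳 f

/-- The ideal `[𝒳](A,B)` of morphisms factoring through an object of `𝒳`. -/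
def homIdeal (A B : C) : AddSubgroup (A ⟶ B) where
  carrier := {f | ∃ M : C, 𝒳.mem M ∧ ∃ (g : A ⟶ M) (h : M ⟶ B), g ≫ h = f}
  zero_mem' := ⟨(0 : C), 𝒳.zero_mem (0 : C) (isZero_zero C), 0, 0, by simp⟩
  add_mem' := by
    rintro f f' ⟨M, hM, g, h, rfl⟩ ⟨M', hM', g', h', rfl⟩
    exact ⟨M ⊞ M', 𝒳.sum_mem hM hM', biprod.lift g g', biprod.desc h h', by simp⟩
  neg_mem' := by
    rintro f ⟨M, hM, g, h, rfl⟩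
    exact ⟨M, hM, -g, h, by simp⟩

lemma homIdeal.comp_right {A B B' : C} {f : A ⟶ B} (hf : f ∈ homIdeal 𝒳 A B)
    (u : B ⟶ B') : f ≫ u ∈ homIdeal 𝒳 A B' := by
  obtain ⟨M, hM, g, h, rfl⟩ := hf
  exact ⟨M, hM, g, h ≫ u, by simp⟩

lemma homIdeal.comp_left {A' A B : C} {f : A ⟶ B} (hf : f ∈ homIdeal 𝒳 A B)
    (u : A' ⟶ A) : u ≫ f ∈ homIdeal 𝒳 A' B := by
  obtain ⟨M, hM, g, h, rfl⟩ := hf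
  exact ⟨M, hM, u ≫ g, h, by simp⟩

/-- The objects of the quotient category `C/𝒳`. -/
@[ext]
structure QuotObj (𝒳 : AddSubcat C) : Type u where
  as : C

/-- The quotient (additive) category `C/𝒳`. -/
instance QuotObj.category : Category.{v} (QuotObj 𝒳) where
  Hom A B := (A.as ⟶ B.as) ⧸ homIdeal 𝒳 A.as B.as
  id A := QuotientAddGroup.mk (𝟙 A.as)
  comp {A B D} f g := Quotient.liftOn₂ f g
    (fun f g => QuotientAddGroup.mk (f ≫ g))
    (by
      intro a₁ a₂ b₁ b₂ h₁ h₂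
      replace h₁ := QuotientAddGroup.leftRel_apply.mp h₁
      replace h₂ := QuotientAddGroup.leftRel_apply.mp h₂
      show QuotientAddGroup.mk (a₁ ≫ a₂) = QuotientAddGroup.mk (b₁ ≫ b₂)
      rw [QuotientAddGroup.eq]
      have heq : -(a₁ ≫ a₂) + b₁ ≫ b₂ =
          (-a₁ + b₁) ≫ a₂ + b₁ ≫ (-a₂ + b₂) := by
        simp only [Preadditive.add_comp, Preadditive.comp_add,
          Preadditive.neg_comp, Preadditive.comp_neg]
        abel
      rw [heq]
      exact (homIdeal 𝒳 _ _).add_mem (homIdeal.comp_right 𝒳 h₁ a₂)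
        (homIdeal.comp_left 𝒳 h₂ b₁))
  id_comp f := by
    induction f using Quotient.inductionOn
    exact congrArg _ (Category.id_comp _)
  comp_id f := by
    induction f using Quotient.inductionOn
    exact congrArg _ (Category.comp_id _)
  assoc f g h := by
    induction f using Quotient.inductionOn
    induction g using Quotient.inductionOn
    induction h using Quotient.inductionOn
    exact congrArg _ (Category.assoc _ _ _)

instance QuotObj.preadditive : Preadditive (QuotObj 𝒳) where
  homGroup A B := inferInstanceAs (AddCommGroup ((A.as ⟶ B.as) ⧸ homIdeal 𝒳 A.as B.as))
  add_comp A B D f f' g := by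
    induction f using Quotient.inductionOn
    induction f' using Quotient.inductionOn
    induction g using Quotient.inductionOn
    exact congrArg _ (Preadditive.add_comp _ _ _ _ _ _)
  comp_add A B D f g g' := by
    induction f using Quotient.inductionOn
    induction g using Quotient.inductionOn
    induction g' using Quotient.inductionOn
    exact congrArg _ (Preadditive.comp_add _ _ _ _ _ _)

/-- The quotient functor `C ⥤ C/𝒳`. -/
def quotFunctor : C ⥤ QuotObj 𝒳 where
  obj A := ⟨A⟩
  map f := QuotientAddGroup.mk f
  map_id _ := rfl
  map_comp _ _ := rfl

end Quot

section QuotBiprod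

variable {C : Type u} [Category.{v} C] [Preadditive C] [HasZeroObject C]
  [HasBinaryBiproducts C] (𝒳 : AddSubcat C)

instance QuotObj.hasBinaryBiproducts : HasBinaryBiproducts (QuotObj 𝒳) := by
  apply HasBinaryBiproducts.mk
  intro A B
  apply HasBinaryBiproduct.mk
  refine ⟨{ pt := ⟨A.as ⊞ B.as⟩
            fst := QuotientAddGroup.mk biprod.fst
            snd := QuotientAddGroup.mk biprod.snd
            inl := QuotientAddGroup.mk biprod.inl
            inr := QuotientAddGroup.mk biprod.inr
            inl_fst := ?_, inl_snd := ?_, inr_fst := ?_, inr_snd := ?_ }, ?_⟩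
  · show QuotientAddGroup.mk (biprod.inl ≫ biprod.fst) =
      QuotientAddGroup.mk (𝟙 A.as)
    rw [biprod.inl_fst]
  · show QuotientAddGroup.mk (biprod.inl ≫ biprod.snd) = _
    rw [biprod.inl_snd]; rfl
  · show QuotientAddGroup.mk (biprod.inr ≫ biprod.fst) = _
    rw [biprod.inr_fst]; rfl
  · show QuotientAddGroup.mk (biprod.inr ≫ biprod.snd) =
      QuotientAddGroup.mk (𝟙 B.as)
    rw [biprod.inr_snd]
  · apply isBinaryBilimitOfTotal
    show QuotientAddGroup.mk (biprod.fst ≫ biprod.inl) +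
        QuotientAddGroup.mk (biprod.snd ≫ biprod.inr) =
      QuotientAddGroup.mk (𝟙 (A.as ⊞ B.as))
    rw [show QuotientAddGroup.mk (biprod.fst ≫ biprod.inl) + QuotientAddGroup.mk (biprod.snd ≫ biprod.inr) = (QuotientAddGroup.mk (biprod.fst ≫ biprod.inl + biprod.snd ≫ biprod.inr) : (⟨A.as ⊞ B.as⟩ : QuotObj 𝒳) ⟶ ⟨A.as ⊞ B.as⟩) from rfl]
    rw [biprod.total]

end QuotBiprod
section NAbelian

variable (n : ℕ) {C : Type u} [Category.{v} C] [Preadditive C]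

/-- `g` is a weak cokernel of `f`. -/
def IsWeakCokernel {A B D : C} (f : A ⟶ B) (g : B ⟶ D) : Prop :=
  f ≫ g = 0 ∧ ∀ (Z : C) (h : B ⟶ Z), f ≫ h = 0 → ∃ p : D ⟶ Z, g ≫ p = h

/-- `f` is a weak kernel of `g`. -/
def IsWeakKernel {A B D : C} (f : A ⟶ B) (g : B ⟶ D) : Prop :=
  f ≫ g = 0 ∧ ∀ (Z : C) (h : Z ⟶ B), h ≫ g = 0 → ∃ p : Z ⟶ A, p ≫ f = h

/-- The sequence `S.obj 1 → ⋯ → S.obj (n+1)` is an `n`-cokernel of `S.map 0`,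
i.e. `0 → (S_{n+1}, B) → ⋯ → (S_1, B) → (S_0, B)` is exact for every `B`. -/
def IsNCokernelOf (S : ExSeq C) : Prop :=
  (∀ i, i + 1 ≤ n → ∀ (Z : C) (h : S.obj (i + 1) ⟶ Z),
    (S.map i ≫ h = 0 ↔ ∃ p : S.obj (i + 2) ⟶ Z, S.map (i + 1) ≫ p = h)) ∧
  (∀ (Z : C) (g : S.obj (n + 1) ⟶ Z), S.map n ≫ g = 0 → g = 0)

/-- The sequence `S.obj 0 → ⋯ → S.obj n` is an `n`-kernel of `S.map n`,
i.e. `0 → (B, S_0) → ⋯ → (B, S_n) → (B, S_{n+1})` is exact for every `B`. -/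
def IsNKernelOf (S : ExSeq C) : Prop :=
  (∀ i, i + 1 ≤ n → ∀ (Z : C) (h : Z ⟶ S.obj (i + 1)),
    (h ≫ S.map (i + 1) = 0 ↔ ∃ p : Z ⟶ S.obj i, p ≫ S.map i = h)) ∧
  (∀ (Z : C) (g : Z ⟶ S.obj 0), g ≫ S.map 0 = 0 → g = 0)

/-- `n`-exact sequences. -/
def IsNExactSeq (S : ExSeq C) : Prop := IsNCokernelOf n S ∧ IsNKernelOf n S

/-- The sequence `S` starts with (a copy of) the morphism `f`. -/
def ExSeq.startsWith (S : ExSeq C) {A B : C} (f : A ⟶ B) : Prop :=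
  ∃ (h0 : S.obj 0 = A) (h1 : S.obj 1 = B), S.map 0 = eqToHom h0 ≫ f ≫ eqToHom h1.symm

/-- The sequence `S` ends (at position `n`) with (a copy of) the morphism `f`. -/
def ExSeq.endsWith (n : ℕ) (S : ExSeq C) {A B : C} (f : A ⟶ B) : Prop :=
  ∃ (h0 : S.obj n = A) (h1 : S.obj (n + 1) = B),
    S.map n = eqToHom h0 ≫ f ≫ eqToHom h1.symm

/-- `n`-abelian category, following Jasso: an additive category with split
idempotents in which every morphism has an `n`-kernel and an `n`-cokernel,
every monomorphism is the `0`-th morphism of an `n`-exact sequence, and every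
epimorphism is the `n`-th morphism of an `n`-exact sequence. -/
structure IsNAbelian (n : ℕ) (D : Type u) [Category.{v} D] [Preadditive D] : Prop where
  hasFiniteBiproducts : HasFiniteBiproducts D
  idemSplit : IsIdempotentComplete D
  hasNCokernels : ∀ {A B : D} (f : A ⟶ B),
    ∃ S : ExSeq D, S.startsWith f ∧ IsNCokernelOf n S
  hasNKernels : ∀ {A B : D} (f : A ⟶ B),
    ∃ S : ExSeq D, S.endsWith n f ∧ IsNKernelOf n S
  monoIsNExact : ∀ {A B : D} (f : A ⟶ B), Mono f →
    ∃ S : ExSeq D, S.startsWith f ∧ IsNExactSeq n S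
  epiIsNExact : ∀ {A B : D} (f : A ⟶ B), Epi f →
    ∃ S : ExSeq D, S.endsWith n f ∧ IsNExactSeq n S

end NAbelian

section ClusterTilting

variable {n : ℕ} {C : Type u} [Category.{v} C] [Preadditive C] [HasZeroObject C]
  [HasBinaryBiproducts C]

/-- A cluster tilting subcategory of an `n`-exangulated category. -/
def ExData.ClusterTilting (S : ExData n C) (𝒳 : AddSubcat C) : Prop :=
  (∀ X X' : C, 𝒳.mem X → 𝒳.mem X' → ∀ δ : S.Ext X X', δ = 0) ∧
  (∀ Cc : C, ∃ (X : ExSeq C) (δ : S.Ext (X.obj (n + 1)) (X.obj 0)),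
    S.Dist X δ ∧ X.obj (n + 1) = Cc ∧ ∀ i, i ≤ n → 𝒳.mem (X.obj i)) ∧
  (∀ A : C, ∃ (X : ExSeq C) (δ : S.Ext (X.obj (n + 1)) (X.obj 0)),
    S.Dist X δ ∧ X.obj 0 = A ∧ ∀ i, 1 ≤ i → i ≤ n + 1 → 𝒳.mem (X.obj i))

end ClusterTilting
section Angulated

variable {C : Type u} [Category.{v} C] [Preadditive C]

/-- An `(n+2)`-`Σ`-sequence `A₀ → A₁ → ⋯ → A_{n+1} → Σ A₀`. -/
structure SgSeq (C : Type u) [Category.{v} C] (Sg : C ⥤ C) (n : ℕ) :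
    Type max u v where
  obj : ℕ → C
  map : ∀ i, obj i ⟶ obj (i + 1)
  ext : obj (n + 1) ⟶ Sg.obj (obj 0)

/-- A morphism of `(n+2)`-`Σ`-sequences. -/
structure SgSeqHom {C : Type u} [Category.{v} C] {Sg : C ⥤ C} {n : ℕ}
    (X Y : SgSeq C Sg n) : Type max u v where
  hom : ∀ i, X.obj i ⟶ Y.obj i
  comm : ∀ i, i ≤ n → X.map i ≫ hom (i + 1) = hom i ≫ Y.map i
  comm_ext : X.ext ≫ Sg.map (hom 0) = hom (n + 1) ≫ Y.ext

variable {Sg : C ⥤ C} {n : ℕ}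

/-- `T` is (equal to) the trivial sequence `0 → A = A → 0 → ⋯ → 0`. -/
def IsTrivialSgSeq (A : C) (T : SgSeq C Sg n) : Prop :=
  IsZero (T.obj 0) ∧
  (∃ (h1 : T.obj 1 = A) (h2 : T.obj 2 = A), T.map 1 = eqToHom (h1.trans h2.symm)) ∧
  (∀ i, 3 ≤ i → i ≤ n + 1 → IsZero (T.obj i))

variable [HasBinaryBiproducts C]

/-- `U` is the direct sum of the sequences `X` and `Y`. -/
def IsBiprodSgSeq (X Y U : SgSeq C Sg n) : Prop :=
  ∃ e : ∀ i, i ≤ n + 1 → U.obj i = (X.obj i ⊞ Y.obj i),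
    (∀ i (h : i + 1 ≤ n + 1), U.map i = eqToHom (e i (by omega)) ≫
      biprod.map (X.map i) (Y.map i) ≫ eqToHom (e (i + 1) h).symm) ∧
    U.ext = eqToHom (e (n + 1) le_rfl) ≫
      biprod.desc (X.ext ≫ Sg.map biprod.inl) (Y.ext ≫ Sg.map biprod.inr) ≫
        eqToHom (congrArg Sg.obj (e 0 (by omega)).symm)

/-- `T` is the left rotation of `X`. -/
def IsRotation (X T : SgSeq C Sg n) : Prop :=
  ∃ (e : ∀ i, i ≤ n → T.obj i = X.obj (i + 1)) (el : T.obj (n + 1) = Sg.obj (X.obj 0)),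
    (∀ i (h : i + 1 ≤ n), T.map i = eqToHom (e i (by omega)) ≫ X.map (i + 1) ≫
      eqToHom (e (i + 1) h).symm) ∧
    (T.map n = eqToHom (e n le_rfl) ≫ X.ext ≫ eqToHom el.symm) ∧
    (T.ext = eqToHom el ≫ (((-1 : ℤ) ^ n) • Sg.map (X.map 0)) ≫
      eqToHom (congrArg Sg.obj (e 0 (by omega)).symm))

/-- The axioms (RN1), (RN2), (RN3) of a right `(n+2)`-angulated category. -/
structure RightAngulatedRN123 (Sg : C ⥤ C) (n : ℕ) (Θ : Set (SgSeq C Sg n)) : Prop where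
  /-- (RN1)(a): `Θ` is closed under isomorphisms. -/
  iso_closed : ∀ (X Y : SgSeq C Sg n) (f : SgSeqHom X Y),
    (∀ i, i ≤ n + 1 → IsIso (f.hom i)) → X ∈ Θ → Y ∈ Θ
  /-- (RN1)(a): `Θ` is closed under direct sums. -/
  sum_closed : ∀ X Y U : SgSeq C Sg n, X ∈ Θ → Y ∈ Θ → IsBiprodSgSeq X Y U → U ∈ Θ
  /-- (RN1)(b): the trivial sequences belong to `Θ`. -/
  trivial_mem : ∀ A : C, ∃ T ∈ Θ, IsTrivialSgSeq A T
  /-- (RN1)(c): every morphism extends to a right `(n+2)`-angle. -/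
  extend : ∀ {A B : C} (f : A ⟶ B), ∃ T ∈ Θ, ∃ (h0 : T.obj 0 = A) (h1 : T.obj 1 = B),
    T.map 0 = eqToHom h0 ≫ f ≫ eqToHom h1.symm
  /-- (RN2): `Θ` is closed under left rotation. -/
  rot : ∀ X ∈ Θ, ∀ T, IsRotation X T → T ∈ Θ
  /-- (RN3): commutative squares extend to morphisms of right `(n+2)`-angles. -/
  rn3 : ∀ X Y : SgSeq C Sg n, X ∈ Θ → Y ∈ Θ →
    ∀ (a : X.obj 0 ⟶ Y.obj 0) (b : X.obj 1 ⟶ Y.obj 1), X.map 0 ≫ b = a ≫ Y.map 0 →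
      ∃ f : SgSeqHom X Y, f.hom 0 = a ∧ f.hom 1 = b

/-- A right `(n+2)`-angulated category: (RN1)–(RN3) together with the higher
octahedral axiom (RN4). -/
structure RightAngulated (Sg : C ⥤ C) (n : ℕ) (Θ : Set (SgSeq C Sg n)) extends
    RightAngulatedRN123 Sg n Θ : Prop where
  /-- (RN4): the higher octahedral axiom. -/
  rn4 : ∀ X Y U : SgSeq C Sg n, X ∈ Θ → Y ∈ Θ → U ∈ Θ →
    ∀ (h0 : Y.obj 0 = X.obj 0) (hU0 : U.obj 0 = X.obj 1) (hU1 : U.obj 1 = Y.obj 1),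
    Y.map 0 = eqToHom h0 ≫ X.map 0 ≫ (eqToHom hU0.symm ≫ U.map 0 ≫ eqToHom hU1) →
    ∃ (φ : ∀ i, X.obj i ⟶ Y.obj i) (ψ : ∀ i, Y.obj i ⟶ U.obj i)
      (φ' : ∀ i, X.obj (i + 1) ⟶ U.obj i),
      φ 0 = eqToHom h0.symm ∧
      φ 1 = eqToHom hU0.symm ≫ U.map 0 ≫ eqToHom hU1 ∧
      (∀ i, i ≤ n → X.map i ≫ φ (i + 1) = φ i ≫ Y.map i) ∧
      (φ (n + 1) ≫ Y.ext ≫ eqToHom (congrArg Sg.obj h0) = X.ext) ∧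
      (ψ (n + 1) ≫ U.ext ≫ eqToHom (congrArg Sg.obj hU0) =
        Y.ext ≫ eqToHom (congrArg Sg.obj h0) ≫ Sg.map (X.map 0)) ∧
      ∃ V ∈ Θ, ∃ (hV0 : V.obj 0 = X.obj 2)
        (hV1 : 2 ≤ n → V.obj 1 = (X.obj 3 ⊞ Y.obj 2))
        (hVmid : ∀ i, 2 ≤ i → i + 1 ≤ n → V.obj i = ((X.obj (i + 2) ⊞ Y.obj (i + 1)) ⊞ U.obj i))
        (hVn : ∀ j, j = n → 2 ≤ n → V.obj j = (Y.obj (j + 1) ⊞ U.obj j))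
        (hVl : V.obj (n + 1) = U.obj (n + 1)),
        (∀ h : 2 ≤ n, V.map 0 =
          eqToHom hV0 ≫ biprod.lift (X.map 2) (φ 2) ≫ eqToHom (hV1 h).symm) ∧
        (∀ h : 3 ≤ n, V.map 1 = eqToHom (hV1 (by omega)) ≫
          biprod.desc (biprod.lift (biprod.lift (-(X.map 3)) (φ 3)) (φ' 2))
            (biprod.lift (biprod.lift 0 (-(Y.map 2))) (ψ 2)) ≫
          eqToHom (hVmid 2 le_rfl h).symm) ∧
        (∀ i (h2 : 2 ≤ i) (hn : i + 2 ≤ n), V.map i =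
          eqToHom (hVmid i (by omega) (by omega)) ≫
          biprod.desc
            (biprod.desc
              (biprod.lift (biprod.lift (-(X.map (i + 2))) (((-1 : ℤ) ^ (i + 1)) • φ (i + 2))) (φ' (i + 1)))
              (biprod.lift (biprod.lift 0 (-(Y.map (i + 1)))) (ψ (i + 1))))
            (biprod.lift (biprod.lift 0 0) (U.map i)) ≫
          eqToHom (hVmid (i + 1) (by omega) (by omega)).symm) ∧
        (∀ h : n = 2, V.map 1 = eqToHom (hV1 (by omega)) ≫
          biprod.desc (biprod.lift (φ 3) (φ' 2)) (biprod.lift (-(Y.map 2)) (ψ 2)) ≫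
          eqToHom (hVn 2 h.symm (by omega)).symm) ∧
        (∀ i (h2 : 2 ≤ i) (hn : i + 1 = n), V.map i =
          eqToHom (hVmid i (by omega) (by omega)) ≫
          biprod.desc
            (biprod.desc
              (biprod.lift (((-1 : ℤ) ^ (i + 1)) • φ (i + 2)) (φ' (i + 1)))
              (biprod.lift (-(Y.map (i + 1))) (ψ (i + 1))))
            (biprod.lift 0 (U.map i)) ≫
          eqToHom (hVn (i + 1) (by omega) (by omega)).symm) ∧
        (∀ j (hj : j = n) (hn : 2 ≤ n), V.map j =
          eqToHom (hVn j hj hn) ≫ biprod.desc (ψ (j + 1)) (U.map j) ≫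
          eqToHom (show U.obj (j + 1) = V.obj (j + 1) from by rw [hj]; exact hVl.symm)) ∧
        (V.ext = eqToHom hVl ≫ U.ext ≫ eqToHom (congrArg Sg.obj hU0) ≫
          Sg.map (X.map 1) ≫ eqToHom (congrArg Sg.obj hV0).symm) ∧
        (∀ h : n = 1, ∃ e1 : V.obj 1 = Y.obj 2,
          V.map 0 = eqToHom hV0 ≫ φ 2 ≫ eqToHom e1.symm ∧
          V.map 1 = eqToHom e1 ≫ ψ 2 ≫
            eqToHom (show U.obj 2 = V.obj 2 from by
              rw [show (2 : ℕ) = n + 1 from by omega]; exact hVl.symm))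

/-- An `(n+2)`-angulated category in the sense of Geiss–Keller–Oppermann:
in addition to being right `(n+2)`-angulated, the suspension is an equivalence,
and `Θ` is closed under direct summands and inverse rotation. -/
structure Angulated (Sg : C ⥤ C) (n : ℕ) (Θ : Set (SgSeq C Sg n)) extends
    RightAngulated Sg n Θ : Prop where
  sg_equiv : Sg.IsEquivalence
  sg_additive : Sg.Additive
  rot_rev : ∀ X T : SgSeq C Sg n, IsRotation X T → T ∈ Θ → X ∈ Θ
  summand_closed : ∀ X Y U : SgSeq C Sg n, IsBiprodSgSeq X Y U → U ∈ Θ → X ∈ Θ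

end Angulated


/-! ### Auxiliary E-extension calculus -/

namespace ExData

variable {n : ℕ} {C : Type u} [Category.{v} C] [Preadditive C] (S : ExData n C)

lemma push_id' {Cc A : C} (δ : S.Ext Cc A) : S.push (𝟙 A) δ = δ := by
  simp [ExData.push]

lemma pull_id' {Cc A : C} (δ : S.Ext Cc A) : S.pull (𝟙 Cc) δ = δ := by
  simp [ExData.pull]

lemma push_comp' {Cc A A' A'' : C} (f : A ⟶ A') (g : A' ⟶ A'') (δ : S.Ext Cc A) :
    S.push (f ≫ g) δ = S.push g (S.push f δ) := by
  simp [ExData.push]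

lemma pull_comp' {Cc'' Cc' Cc A : C} (f : Cc'' ⟶ Cc') (g : Cc' ⟶ Cc) (δ : S.Ext Cc A) :
    S.pull (f ≫ g) δ = S.pull f (S.pull g δ) := by
  simp [ExData.pull]

lemma push_pull' {Cc' Cc A A' : C} (c : Cc' ⟶ Cc) (a : A ⟶ A') (δ : S.Ext Cc A) :
    S.push a (S.pull c δ) = S.pull c (S.push a δ) := by
  simp only [ExData.push, ExData.pull]
  rw [← comp_apply, ← (S.E.map c.op).naturality a, comp_apply]

lemma push_add' (hr : ∀ X : Cᵒᵖ, (S.E.obj X).Additive)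
    {Cc A A' : C} (f g : A ⟶ A') (δ : S.Ext Cc A) :
    S.push (f + g) δ = S.push f δ + S.push g δ := by
  haveI := hr (op Cc)
  simp only [ExData.push, Functor.map_add]
  rfl

lemma push_sub' (hr : ∀ X : Cᵒᵖ, (S.E.obj X).Additive)
    {Cc A A' : C} (f g : A ⟶ A') (δ : S.Ext Cc A) :
    S.push (f - g) δ = S.push f δ - S.push g δ := by
  haveI := hr (op Cc)
  simp only [ExData.push, Functor.map_sub]
  rfl

lemma push_zero_elt' {Cc A A' : C} (f : A ⟶ A') :
    S.push f (0 : S.Ext Cc A) = 0 := by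
  simp [ExData.push]

lemma pull_zero_elt' {Cc' Cc A : C} (c : Cc' ⟶ Cc) :
    S.pull c (0 : S.Ext Cc A) = 0 := by
  simp [ExData.pull]

lemma pull_zero' (hl : S.E.Additive) {Cc' Cc A : C} (δ : S.Ext Cc A) :
    S.pull (0 : Cc' ⟶ Cc) δ = 0 := by
  haveI := hl
  have h : (0 : Cc' ⟶ Cc).op = 0 := rfl
  simp only [ExData.pull, h, Functor.map_zero, NatTrans.app_zero]
  rfl

lemma pull_elt_add {Cc' Cc A : C} (c : Cc' ⟶ Cc) (x y : S.Ext Cc A) :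
    S.pull c (x + y) = S.pull c x + S.pull c y :=
  ((S.E.map c.op).app A).hom.map_add x y

lemma push_elt_add {Cc A A' : C} (f : A ⟶ A') (x y : S.Ext Cc A) :
    S.push f (x + y) = S.push f x + S.push f y :=
  ((S.E.obj (op Cc)).map f).hom.map_add x y

lemma pull_add' (hl : S.E.Additive) {Cc' Cc A : C} (c c' : Cc' ⟶ Cc) (δ : S.Ext Cc A) :
    S.pull (c + c') δ = S.pull c δ + S.pull c' δ := by
  haveI := hl
  have h : (c + c').op = c.op + c'.op := rfl
  simp only [ExData.pull, h, Functor.map_add, NatTrans.app_add]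
  rfl

lemma pull_sub' (hl : S.E.Additive) {Cc' Cc A : C} (c c' : Cc' ⟶ Cc) (δ : S.Ext Cc A) :
    S.pull (c - c') δ = S.pull c δ - S.pull c' δ := by
  haveI := hl
  have h : (c - c').op = c.op - c'.op := rfl
  simp only [ExData.pull, h, Functor.map_sub, NatTrans.app_sub]
  rfl

end ExData

/-! ### The construction of the cosyzygy functor -/

section CosyzygyConstruction

set_option linter.unusedSectionVars false

variable {n : ℕ} {C : Type u} [Category.{v} C] [Preadditive C]
  [HasZeroObject C] [HasBinaryBiproducts C]
  (S : ExData n C) (𝒳 : AddSubcat C)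
  (T : C → ExSeq C) (δT : ∀ A, S.Ext ((T A).obj (n + 1)) ((T A).obj 0))
  (hT0 : ∀ A, (T A).obj 0 = A)

/-- Conjugate a morphism of `C` to a morphism between the `0`-th objects of the
chosen `n`-exangles. -/
def lft {A B : C} (a : A ⟶ B) : (T A).obj 0 ⟶ (T B).obj 0 :=
  eqToHom (hT0 A) ≫ a ≫ eqToHom (hT0 B).symm

lemma lft_id (A : C) : lft T hT0 (𝟙 A) = 𝟙 ((T A).obj 0) := by
  simp [lft]

lemma lft_comp {A B D : C} (a : A ⟶ B) (b : B ⟶ D) :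
    lft T hT0 (a ≫ b) = lft T hT0 a ≫ lft T hT0 b := by
  simp [lft]

lemma lft_add {A B : C} (a a' : A ⟶ B) :
    lft T hT0 (a + a') = lft T hT0 a + lft T hT0 a' := by
  simp [lft, Preadditive.add_comp, Preadditive.comp_add]

lemma lft_sub {A B : C} (a a' : A ⟶ B) :
    lft T hT0 (a - a') = lft T hT0 a - lft T hT0 a' := by
  simp [lft, Preadditive.sub_comp, Preadditive.comp_sub]

/-- `(a, c)` is a morphism of `E`-extensions from the chosen `n`-exangle of `A`
to the chosen one of `B`. -/
def IsPair {A B : C} (a : A ⟶ B)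
    (c : (T A).obj (n + 1) ⟶ (T B).obj (n + 1)) : Prop :=
  S.push (lft T hT0 a) (δT A) = S.pull c (δT B)

lemma isPair_id (A : C) :
    IsPair S T δT hT0 (𝟙 A) (𝟙 ((T A).obj (n + 1))) := by
  unfold IsPair
  rw [lft_id, S.push_id', S.pull_id']

lemma isPair_comp {A B D : C} {a : A ⟶ B} {b : B ⟶ D}
    {c : (T A).obj (n + 1) ⟶ (T B).obj (n + 1)}
    {d : (T B).obj (n + 1) ⟶ (T D).obj (n + 1)}
    (h1 : IsPair S T δT hT0 a c) (h2 : IsPair S T δT hT0 b d) :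
    IsPair S T δT hT0 (a ≫ b) (c ≫ d) := by
  unfold IsPair at *
  rw [lft_comp, S.push_comp', h1, S.push_pull', h2, ← S.pull_comp']

lemma isPair_add (hl : S.E.Additive) (hr : ∀ X : Cᵒᵖ, (S.E.obj X).Additive)
    {A B : C} {a a' : A ⟶ B}
    {c c' : (T A).obj (n + 1) ⟶ (T B).obj (n + 1)}
    (h1 : IsPair S T δT hT0 a c) (h2 : IsPair S T δT hT0 a' c') :
    IsPair S T δT hT0 (a + a') (c + c') := by
  unfold IsPair at *
  rw [lft_add, S.push_add' hr, S.pull_add' hl, h1, h2]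

lemma push_lft_ideal (hS : IsExangulated S)
    (hTdist : ∀ A, S.Dist (T A) (δT A))
    (hTapprox : ∀ A, XMonic 𝒳 (eqToHom (hT0 A).symm ≫ (T A).map 0))
    {A B : C} {a : A ⟶ B} (ha : a ∈ homIdeal 𝒳 A B) :
    S.push (lft T hT0 a) (δT A) = 0 := by
  obtain ⟨M, hM, g, h, rfl⟩ := ha
  have h1 : lft T hT0 (g ≫ h) =
      (eqToHom (hT0 A) ≫ g) ≫ (h ≫ eqToHom (hT0 B).symm) := by
    simp [lft]
  rw [h1, S.push_comp']
  have h2 : S.push (eqToHom (hT0 A) ≫ g) (δT A) = 0 := by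
    obtain ⟨k, hk⟩ := hTapprox A M hM g
    refine (hS.ex_con_last (T A) (δT A) (hTdist A) M (eqToHom (hT0 A) ≫ g)).mpr ⟨k, ?_⟩
    rw [Category.assoc] at hk
    calc (T A).map 0 ≫ k
        = eqToHom (hT0 A) ≫ (eqToHom (hT0 A).symm ≫ ((T A).map 0 ≫ k)) := by simp
      _ = eqToHom (hT0 A) ≫ g := by rw [hk]
  rw [h2, S.push_zero_elt']

lemma isPair_mem (hn : 0 < n) (hS : IsExangulated S)
    (hTdist : ∀ A, S.Dist (T A) (δT A))
    (hTX : ∀ A, ∀ i, 1 ≤ i → i ≤ n → 𝒳.mem ((T A).obj i))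
    (hTapprox : ∀ A, XMonic 𝒳 (eqToHom (hT0 A).symm ≫ (T A).map 0))
    {A B : C} {a a' : A ⟶ B}
    {c c' : (T A).obj (n + 1) ⟶ (T B).obj (n + 1)}
    (h1 : IsPair S T δT hT0 a c) (h2 : IsPair S T δT hT0 a' c')
    (ha : a' - a ∈ homIdeal 𝒳 A B) :
    c' - c ∈ homIdeal 𝒳 ((T A).obj (n + 1)) ((T B).obj (n + 1)) := by
  have hz : S.pull (c' - c) (δT B) = 0 := by
    rw [S.pull_sub' hS.additive_left, ← h1, ← h2, ← S.push_sub' hS.additive_right,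
      ← lft_sub]
    exact push_lft_ideal S 𝒳 T δT hT0 hS hTdist hTapprox ha
  obtain ⟨h, hh⟩ := (hS.ex_cov_last (T B) (δT B) (hTdist B) _ (c' - c)).mp hz
  exact ⟨(T B).obj n, hTX B n hn le_rfl, h, (T B).map n, hh⟩

/-- **Key existence statement**: every morphism admits a morphism of
`E`-extensions between the chosen distinguished `n`-exangles lifting it. -/
lemma pair_exists (hn : 0 < n) (hS : IsExangulated S)
    (hTdist : ∀ A, S.Dist (T A) (δT A))
    (hTX : ∀ A, ∀ i, 1 ≤ i → i ≤ n → 𝒳.mem ((T A).obj i))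
    (hTapprox : ∀ A, XMonic 𝒳 (eqToHom (hT0 A).symm ≫ (T A).map 0))
    {A B : C} (a : A ⟶ B) :
    ∃ c, IsPair S T δT hT0 a c := by
  obtain ⟨m, rfl⟩ : ∃ m, n = m + 1 := ⟨n - 1, by omega⟩
  -- both `σ := push (lft a) (δT A)` and `ρ := δT B` die under push along `(T B).map 0`
  have hρkill : S.push ((T B).map 0) (δT B) = 0 :=
    (hS.ex_con_last (T B) (δT B) (hTdist B) _ ((T B).map 0)).mpr
      ⟨𝟙 _, Category.comp_id _⟩
  have hσkill : S.push ((T B).map 0) (S.push (lft T hT0 a) (δT A)) = 0 := by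
    rw [← S.push_comp']
    obtain ⟨k, hk⟩ := hTapprox A ((T B).obj 1) (hTX B 1 le_rfl hn)
      (a ≫ eqToHom (hT0 B).symm ≫ (T B).map 0)
    refine (hS.ex_con_last (T A) (δT A) (hTdist A) _ _).mpr ⟨k, ?_⟩
    have e1 : (T A).map 0 ≫ k
        = eqToHom (hT0 A) ≫ ((eqToHom (hT0 A).symm ≫ (T A).map 0) ≫ k) := by simp
    rw [e1, hk]
    simp [lft]
  -- the glued extension γ over the biproduct
  set γ : S.Ext ((T A).obj (m + 1 + 1) ⊞ (T B).obj (m + 1 + 1)) ((T B).obj 0) :=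
    S.pull biprod.fst (S.push (lft T hT0 a) (δT A)) + S.pull biprod.snd (δT B)
    with hγ
  have hγl : S.pull biprod.inl γ = S.push (lft T hT0 a) (δT A) := by
    rw [hγ, S.pull_elt_add, ← S.pull_comp', ← S.pull_comp', biprod.inl_fst,
      biprod.inl_snd, S.pull_id', S.pull_zero' hS.additive_left, add_zero]
  have hγr : S.pull biprod.inr γ = δT B := by
    rw [hγ, S.pull_elt_add, ← S.pull_comp', ← S.pull_comp', biprod.inr_fst,
      biprod.inr_snd, S.pull_id', S.pull_zero' hS.additive_left, zero_add]
  have hγkill : S.push ((T B).map 0) γ = 0 := by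
    rw [hγ, S.push_elt_add, S.push_pull', S.push_pull', hσkill, hρkill,
      S.pull_zero_elt', S.pull_zero_elt', add_zero]
  -- realize γ
  obtain ⟨Zg, h0, h1, hZ⟩ := hS.realize ((T B).obj 0) _ γ
  -- apply (EA2) to the pair `(T B, Zg)` with `c = inr`
  have hreq : S.push (eqToHom (h0.symm).symm)
      (S.pull (biprod.inr ≫ eqToHom h1.symm)
        (S.push (eqToHom h0.symm) (S.pull (eqToHom h1) γ))) = δT B := by
    rw [show S.pull (biprod.inr ≫ eqToHom h1.symm)
        (S.push (eqToHom h0.symm) (S.pull (eqToHom h1) γ))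
      = S.push (eqToHom h0.symm) (S.pull (biprod.inr ≫ eqToHom h1.symm)
          (S.pull (eqToHom h1) γ)) from (S.push_pull' _ _ _).symm]
    rw [← S.pull_comp']
    rw [show (biprod.inr ≫ eqToHom h1.symm) ≫ eqToHom h1 = biprod.inr by simp]
    rw [hγr, ← S.push_comp']
    rw [show eqToHom h0.symm ≫ eqToHom (h0.symm).symm = 𝟙 _ by simp]
    rw [S.push_id']
  obtain ⟨f, hf0, hfn, M, hM, hMd⟩ := hS.ea2 (T B) Zg
    (S.push (eqToHom h0.symm) (S.pull (eqToHom h1) γ)) h0.symm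
    (biprod.inr ≫ eqToHom h1.symm) hZ (by rw [hreq]; exact hTdist B)
  -- the mapping cone is distinguished with zero extension
  have hM0 : S.Dist M 0 := by
    have e1 : S.push (eqToHom (h0.symm).symm ≫ (T B).map 0)
        (S.push (eqToHom h0.symm) (S.pull (eqToHom h1) γ)) = 0 := by
      rw [← S.push_comp']
      rw [show eqToHom h0.symm ≫ eqToHom (h0.symm).symm ≫ (T B).map 0
        = (T B).map 0 by simp]
      rw [S.push_pull', hγkill, S.pull_zero_elt']
    rw [e1, S.pull_zero_elt', S.push_zero_elt'] at hMd
    exact hMd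
  -- factor `inl` through the last differential of the cone
  obtain ⟨h, hh⟩ := (hS.ex_cov_last M 0 hM0 _
    (biprod.inl ≫ eqToHom h1.symm ≫ eqToHom hM.hlast.symm)).mp (S.pull_zero_elt' _)
  have hmap := hM.maplast m rfl
  -- the factorization, rewritten in `W ⊞ D`
  have key : (biprod.inl : (T A).obj (m + 1 + 1) ⟶ _)
      = (h ≫ eqToHom (hM.hmid m (by omega))) ≫
        (biprod.desc (f.hom (m + 2)) (Zg.map (m + 1)) ≫ eqToHom h1) := by
    have e2 := congrArg (fun t => t ≫ (eqToHom hM.hlast ≫ eqToHom h1)) hh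
    simp only [Category.assoc, eqToHom_trans, eqToHom_refl, Category.comp_id] at e2
    rw [hmap] at e2
    simp only [Category.assoc, eqToHom_trans, eqToHom_refl, Category.comp_id] at e2
    rw [← e2]
    simp only [Category.assoc]
  -- the morphism c
  refine ⟨(h ≫ eqToHom (hM.hmid m (by omega))) ≫ biprod.fst, ?_⟩
  -- auxiliary extension computations
  have hξ1 : S.pull (f.hom (m + 2)) (S.pull (eqToHom h1) γ) = δT B := by
    rw [← S.pull_comp', hfn, Category.assoc]
    rw [show (eqToHom h1.symm ≫ eqToHom h1 : _ ⟶ _) = 𝟙 _ by simp, Category.comp_id]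
    exact hγr
  have hξ2 : S.pull (Zg.map (m + 1)) (S.pull (eqToHom h1) γ) = 0 := by
    have e3 : S.pull (Zg.map (m + 1))
        (S.push (eqToHom h0.symm) (S.pull (eqToHom h1) γ)) = 0 :=
      (hS.ex_cov_last Zg _ hZ _ (Zg.map (m + 1))).mpr ⟨𝟙 _, Category.id_comp _⟩
    rw [← S.push_pull'] at e3
    have := congrArg (S.push (eqToHom h0)) e3
    rwa [← S.push_comp', S.push_zero_elt',
      show eqToHom h0.symm ≫ eqToHom h0 = 𝟙 _ by simp, S.push_id'] at this
  have hdesc : (biprod.desc (f.hom (m + 2)) (Zg.map (m + 1)) :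
      (T B).obj (m + 2) ⊞ Zg.obj (m + 1) ⟶ Zg.obj (m + 1 + 1))
      = biprod.fst ≫ f.hom (m + 2) + biprod.snd ≫ Zg.map (m + 1) := by
    apply biprod.hom_ext' <;> simp [Preadditive.comp_add]
  -- final verification
  show S.push (lft T hT0 a) (δT A) = _
  rw [← hγl, key, S.pull_comp', S.pull_comp', hdesc, S.pull_comp',
    S.pull_add' hS.additive_left, S.pull_comp', S.pull_comp', hξ1, hξ2,
    S.pull_zero_elt', add_zero, ← S.pull_comp', ← S.pull_comp']

lemma mk_eq_of_pairs (hn : 0 < n) (hS : IsExangulated S)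
    (hTdist : ∀ A, S.Dist (T A) (δT A))
    (hTX : ∀ A, ∀ i, 1 ≤ i → i ≤ n → 𝒳.mem ((T A).obj i))
    (hTapprox : ∀ A, XMonic 𝒳 (eqToHom (hT0 A).symm ≫ (T A).map 0))
    {A B : C} {a a' : A ⟶ B}
    {c c' : (T A).obj (n + 1) ⟶ (T B).obj (n + 1)}
    (h1 : IsPair S T δT hT0 a c) (h2 : IsPair S T δT hT0 a' c')
    (ha : a' - a ∈ homIdeal 𝒳 A B) :
    (QuotientAddGroup.mk c :
      ((T A).obj (n + 1) ⟶ (T B).obj (n + 1)) ⧸ homIdeal 𝒳 _ _) =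
      QuotientAddGroup.mk c' := by
  rw [QuotientAddGroup.eq]
  have := isPair_mem S 𝒳 T δT hT0 hn hS hTdist hTX hTapprox h1 h2 ha
  simpa [sub_eq_neg_add] using this

end CosyzygyConstruction

/-- Given, for every object `A`, a chosen distinguished
`n`-exangle `A → X₁ᴬ → ⋯ → Xₙᴬ → GA ⇢` whose first morphism is a left
`𝒳`-approximation and with `X₁ᴬ, …, Xₙᴬ ∈ 𝒳`, there is a well-defined additive
endofunctor `G` of `C/𝒳` sending `A` to `GA` and `ā` to `φ̄_{n+1}` for any lift
`(a, φ₁, …, φ_{n+1})` of `a` to a morphism of the chosen distinguished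
`n`-exangles; in particular the value does not depend on the lift nor on the
representative of `ā`. -/
theorem exists_wellDefined_cosyzygy_functor
    {n : ℕ} (hn : 0 < n) {C : Type u} [Category.{v} C] [Preadditive C]
    [HasZeroObject C] [HasBinaryBiproducts C]
    (S : ExData n C) (hS : IsExangulated S)
    (𝒳 : AddSubcat C)
    (T : C → ExSeq C) (δT : ∀ A, S.Ext ((T A).obj (n + 1)) ((T A).obj 0))
    (hTdist : ∀ A, S.Dist (T A) (δT A))
    (hT0 : ∀ A, (T A).obj 0 = A)
    (hTX : ∀ A, ∀ i, 1 ≤ i → i ≤ n → 𝒳.mem ((T A).obj i))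
    (hTapprox : ∀ A, XMonic 𝒳 (eqToHom (hT0 A).symm ≫ (T A).map 0)) :
    ∃ G : QuotObj 𝒳 ⥤ QuotObj 𝒳, G.Additive ∧
      ∃ hGobj : ∀ A : C, G.obj ((quotFunctor 𝒳).obj A) =
          (quotFunctor 𝒳).obj ((T A).obj (n + 1)),
        ∀ (A B : C) (a : A ⟶ B) (φ : ExSeqHom n (T A) (T B)),
          φ.hom 0 = eqToHom (hT0 A) ≫ a ≫ eqToHom (hT0 B).symm →
          S.push (φ.hom 0) (δT A) = S.pull (φ.hom (n + 1)) (δT B) →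
          G.map ((quotFunctor 𝒳).map a) =
            eqToHom (hGobj A) ≫ (quotFunctor 𝒳).map (φ.hom (n + 1)) ≫
              eqToHom (hGobj B).symm := by
  classical
  have cm : ∀ {A B : C} (a : A ⟶ B),
      {c : (T A).obj (n + 1) ⟶ (T B).obj (n + 1) // IsPair S T δT hT0 a c} :=
    fun {A B} a => ⟨(pair_exists S 𝒳 T δT hT0 hn hS hTdist hTX hTapprox a).choose,
      (pair_exists S 𝒳 T δT hT0 hn hS hTdist hTX hTapprox a).choose_spec⟩
  refine ⟨{
    obj := fun X => ⟨(T X.as).obj (n + 1)⟩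
    map := fun {X Y} f => Quotient.liftOn f
      (fun a => (QuotientAddGroup.mk (cm a).1 :
        ((T X.as).obj (n + 1) ⟶ (T Y.as).obj (n + 1)) ⧸ homIdeal 𝒳 _ _))
      (fun a b hab => mk_eq_of_pairs S 𝒳 T δT hT0 hn hS hTdist hTX hTapprox
        (cm a).2 (cm b).2 (by
          replace hab := QuotientAddGroup.leftRel_apply.mp hab
          simpa [sub_eq_neg_add] using hab))
    map_id := fun X => by
      show QuotientAddGroup.mk (cm (𝟙 X.as)).1 =
        QuotientAddGroup.mk (𝟙 ((T X.as).obj (n + 1)))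
      exact mk_eq_of_pairs S 𝒳 T δT hT0 hn hS hTdist hTX hTapprox
        (cm (𝟙 X.as)).2 (isPair_id S T δT hT0 X.as)
        (by simpa using (homIdeal 𝒳 X.as X.as).zero_mem)
    map_comp := fun {X Y Z} f g => by
      induction f using Quotient.inductionOn with | _ a => ?_
      induction g using Quotient.inductionOn with | _ b => ?_
      show QuotientAddGroup.mk (cm (a ≫ b)).1 =
        QuotientAddGroup.mk ((cm a).1 ≫ (cm b).1)
      exact mk_eq_of_pairs S 𝒳 T δT hT0 hn hS hTdist hTX hTapprox
        (cm (a ≫ b)).2 (isPair_comp S T δT hT0 (cm a).2 (cm b).2)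
        (by simpa using (homIdeal 𝒳 X.as Z.as).zero_mem) }, ?_, fun A => rfl, ?_⟩
  · constructor
    intro X Y f g
    induction f using Quotient.inductionOn with | _ a => ?_
    induction g using Quotient.inductionOn with | _ b => ?_
    have hsum : (QuotientAddGroup.mk (cm a).1 + QuotientAddGroup.mk (cm b).1 :
        ((T X.as).obj (n + 1) ⟶ (T Y.as).obj (n + 1)) ⧸ homIdeal 𝒳 _ _) =
        QuotientAddGroup.mk ((cm a).1 + (cm b).1) := rfl
    show QuotientAddGroup.mk (cm (a + b)).1 =
      QuotientAddGroup.mk (cm a).1 + QuotientAddGroup.mk (cm b).1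
    rw [hsum]
    exact mk_eq_of_pairs S 𝒳 T δT hT0 hn hS hTdist hTX hTapprox
      (cm (a + b)).2
      (isPair_add S T δT hT0 hS.additive_left hS.additive_right (cm a).2 (cm b).2)
      (by simpa using (homIdeal 𝒳 X.as Y.as).zero_mem)
  · intro A B a φ h0 hcompat
    have hpair : IsPair S T δT hT0 a (φ.hom (n + 1)) := by
      show S.push (lft T hT0 a) (δT A) = _
      rw [show lft T hT0 a = φ.hom 0 from h0.symm]
      exact hcompat
    simp only [eqToHom_refl, Category.comp_id, Category.id_comp]
    change _ = 𝟙 ((quotFunctor 𝒳).obj ((T A).obj (n + 1))) ≫ (quotFunctor 𝒳).map (φ.hom (n + 1)) ≫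
      𝟙 ((quotFunctor 𝒳).obj ((T B).obj (n + 1)))
    rw [Category.comp_id, Category.id_comp]
    show QuotientAddGroup.mk (cm a).1 = QuotientAddGroup.mk (φ.hom (n + 1))
    exact mk_eq_of_pairs S 𝒳 T δT hT0 hn hS hTdist hTX hTapprox
      (cm a).2 hpair (by simpa using (homIdeal 𝒳 A B).zero_mem)
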